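/- (Limits of over-parameterized sparse variables under the coupling α(γ) = −log γ/(2λ).) Fix λ > 0 and for γ ∈ (0,1) set α(γ) = −log γ/(2λ). Let ν : (0,1) → ℝ be a function and define s(γ) = γ²·exp(4α(γ)ν(γ)) − γ²·exp(−4α(γ)ν(γ)). Suppose lim_{γ→0⁺} s(γ) = c exists and lim_{γ→0⁺} ν(γ) = ν̂ exists. Then: (a) if c > 0 then ν̂ = λ; (b) if c < 0 then ν̂ = −λ; (c) if c = 0 then |ν̂| ≤ λ. -/

import Mathlib

open Filter Topology

/-- Limits of over-parameterized sparse variables under the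
coupling `α(γ) = −log γ/(2λ)`: with
`s(γ) = γ²·exp(4α(γ)ν(γ)) − γ²·exp(−4α(γ)ν(γ))`, if `s(γ) → c` and
`ν(γ) → ν̂` as `γ → 0⁺` (within `(0,1)`), then `c > 0 → ν̂ = λ`,
`c < 0 → ν̂ = −λ`, and `c = 0 → |ν̂| ≤ λ`. -/
theorem stmt_13 (lam : ℝ) (hlam : 0 < lam)
    (α : ℝ → ℝ) (hα : ∀ γ ∈ Set.Ioo (0 : ℝ) 1, α γ = -Real.log γ / (2 * lam))
    (ν : ℝ → ℝ) (s : ℝ → ℝ)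
    (hs : ∀ γ ∈ Set.Ioo (0 : ℝ) 1, s γ =
      γ ^ 2 * Real.exp (4 * α γ * ν γ) - γ ^ 2 * Real.exp (-(4 * α γ * ν γ)))
    (c νhat : ℝ)
    (hsc : Tendsto s (𝓝[Set.Ioo (0 : ℝ) 1] 0) (𝓝 c))
    (hνc : Tendsto ν (𝓝[Set.Ioo (0 : ℝ) 1] 0) (𝓝 νhat)) :
    (0 < c → νhat = lam) ∧ (c < 0 → νhat = -lam) ∧ (c = 0 → |νhat| ≤ lam) := by

  have hlam' : lam ≠ 0 := hlam.ne'
  set l := 𝓝[Set.Ioo (0:ℝ) 1] (0:ℝ) with hldef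
  have hne : l.NeBot := by
    rw [hldef, ← mem_closure_iff_nhdsWithin_neBot,
      closure_Ioo (by norm_num : (0:ℝ) ≠ 1)]
    constructor <;> norm_num
  have hlog : Tendsto Real.log l atBot :=
    Real.tendsto_log_nhdsGT_zero.mono_left
      (nhdsWithin_mono 0 Set.Ioo_subset_Ioi_self)
  have h2log : Tendsto (fun γ => 2 * Real.log γ) l atBot :=
    hlog.const_mul_atBot two_pos
  set F : ℝ → ℝ := fun γ => Real.exp (2 * Real.log γ * (1 - ν γ / lam)) with hF
  set G : ℝ → ℝ := fun γ => Real.exp (2 * Real.log γ * (1 + ν γ / lam)) with hG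
  have hse : s =ᶠ[l] fun γ => F γ - G γ := by
    filter_upwards [self_mem_nhdsWithin] with γ hγ
    obtain ⟨hγ0, hγ1⟩ := hγ
    have hα' := hα γ ⟨hγ0, hγ1⟩
    have hs' := hs γ ⟨hγ0, hγ1⟩
    have hexp : γ ^ 2 = Real.exp (2 * Real.log γ) := by
      rw [two_mul, Real.exp_add, Real.exp_log hγ0, sq]
    rw [hs', hα', hexp, ← Real.exp_add, ← Real.exp_add, hF, hG]
    congr 1 <;> field_simp <;> ring
  have hsc' : Tendsto (fun γ => F γ - G γ) l (𝓝 c) := hsc.congr' hse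
  have hwm : Tendsto (fun γ => 1 - ν γ / lam) l (𝓝 (1 - νhat / lam)) :=
    tendsto_const_nhds.sub (hνc.div_const lam)
  have hwp : Tendsto (fun γ => 1 + ν γ / lam) l (𝓝 (1 + νhat / lam)) :=
    tendsto_const_nhds.add (hνc.div_const lam)
  have keyF0 : νhat < lam → Tendsto F l (𝓝 0) := by
    intro h
    have hk : 0 < 1 - νhat / lam := by
      rw [sub_pos, div_lt_one hlam]; exact h
    exact Real.tendsto_exp_atBot.comp (h2log.atBot_mul_pos hk hwm)
  have keyG0 : -lam < νhat → Tendsto G l (𝓝 0) := by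
    intro h
    have hk : 0 < 1 + νhat / lam := by
      have : -1 < νhat / lam := by
        rw [neg_lt, ← neg_div]
        exact (div_lt_one hlam).mpr (by linarith)
      linarith
    exact Real.tendsto_exp_atBot.comp (h2log.atBot_mul_pos hk hwp)
  have keyFtop : lam < νhat → Tendsto F l atTop := by
    intro h
    have hk : 1 - νhat / lam < 0 := by
      rw [sub_neg, lt_div_iff₀ hlam]; linarith
    exact Real.tendsto_exp_atTop.comp (h2log.atBot_mul_neg hk hwm)
  have keyGtop : νhat < -lam → Tendsto G l atTop := by
    intro h
    have hk : 1 + νhat / lam < 0 := by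
      have : νhat / lam < -1 := by
        rw [div_lt_iff₀ hlam]; linarith
      linarith
    exact Real.tendsto_exp_atTop.comp (h2log.atBot_mul_neg hk hwp)
  have hle : |νhat| ≤ lam := by
    rw [abs_le]
    constructor
    · by_contra h
      push_neg at h
      have htop : Tendsto (fun γ => F γ - G γ) l atBot := by
        have := (keyF0 (by linarith : νhat < lam)).add_atBot
          (tendsto_neg_atTop_atBot.comp (keyGtop h))
        simpa [sub_eq_add_neg, Function.comp] using this
      exact not_tendsto_nhds_of_tendsto_atBot htop c hsc'
    · by_contra h
      push_neg at h
      have htop : Tendsto (fun γ => F γ - G γ) l atTop := by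
        have := (keyFtop h).atTop_add (keyG0 (by linarith : -lam < νhat)).neg
        simpa [sub_eq_add_neg] using this
      exact not_tendsto_nhds_of_tendsto_atTop htop c hsc'
  have hmid : -lam < νhat → νhat < lam → c = 0 := by
    intro h1 h2
    have : Tendsto (fun γ => F γ - G γ) l (𝓝 0) := by
      simpa using (keyF0 h2).sub (keyG0 h1)
    exact tendsto_nhds_unique hsc' this
  have heqp : νhat = lam → 0 ≤ c := by
    intro h
    have hG0 : Tendsto G l (𝓝 0) := keyG0 (by linarith)
    have hFc : Tendsto F l (𝓝 c) := by
      have := hsc'.add hG0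
      simpa using this
    exact ge_of_tendsto' hFc fun γ => (Real.exp_pos _).le
  have heqn : νhat = -lam → c ≤ 0 := by
    intro h
    have hF0 : Tendsto F l (𝓝 0) := keyF0 (by linarith)
    have hGc : Tendsto G l (𝓝 (-c)) := by
      have h' : Tendsto (fun γ => F γ - (F γ - G γ)) l (𝓝 (0 - c)) :=
        hF0.sub hsc'
      simpa using h'
    have : 0 ≤ -c := ge_of_tendsto' hGc fun γ => (Real.exp_pos _).le
    linarith
  obtain ⟨hle1, hle2⟩ := abs_le.mp hle
  refine ⟨?_, ?_, fun _ => hle⟩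
  · intro hc
    rcases hle2.lt_or_eq with h2 | h2
    · exfalso
      rcases hle1.lt_or_eq with h1 | h1
      · exact absurd (hmid h1 h2) (by linarith)
      · exact absurd (heqn h1.symm) (by linarith)
    · exact h2
  · intro hc
    rcases hle1.lt_or_eq with h1 | h1
    · exfalso
      rcases hle2.lt_or_eq with h2 | h2
      · exact absurd (hmid h1 h2) (by linarith)
      · exact absurd (heqp h2) (by linarith)
    · exact h1.symm
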